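/- Let u : ℝⁿ → ℝ be continuous and suppose that for some fixed a > 0, for every unit vector e ∈ ℝ^{n−1}×{0} and every y ∈ ℝⁿ₊ with y·e < a, one has u(y) ≥ u(y − 2(y·e − a)e). If this holds for every a > 0, then u(y',yₙ) depends only on (|y'|, yₙ), and r ↦ u restricted to rays in y' is nonincreasing in |y'|. -/

import Mathlib

open scoped BigOperators RealInnerProductSpace

lemma stmt13_key (n : ℕ) (hn : 2 ≤ n) (u : EuclideanSpace ℝ (Fin n) → ℝ)
    (hcont : Continuous u)
    (hrefl : ∀ a : ℝ, 0 < a → ∀ e : EuclideanSpace ℝ (Fin n),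
      ‖e‖ = 1 → e ⟨n - 1, by omega⟩ = 0 →
      ∀ y : EuclideanSpace ℝ (Fin n), 0 < y ⟨n - 1, by omega⟩ → ⟪y, e⟫ < a →
        u (y - (2 * (⟪y, e⟫ - a)) • e) ≤ u y)
    (y z : EuclideanSpace ℝ (Fin n)) (hy : 0 < y ⟨n - 1, by omega⟩)
    (hz : z ⟨n - 1, by omega⟩ = y ⟨n - 1, by omega⟩)
    (hle : ‖y‖ ≤ ‖z‖) : u z ≤ u y := by
  by_cases hzy : z = y
  · exact le_of_eq (by rw [hzy])
  set d : ℝ := ‖z - y‖ with hd_def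
  have hd : 0 < d := by
    simpa [hd_def] using norm_pos_iff.mpr (sub_ne_zero.mpr hzy)
  set e : EuclideanSpace ℝ (Fin n) := d⁻¹ • (z - y) with he_def
  have he_norm : ‖e‖ = 1 := by
    rw [he_def, norm_smul, Real.norm_eq_abs, abs_of_pos (inv_pos.mpr hd), ← hd_def, inv_mul_cancel₀ hd.ne']
  have he_last : e ⟨n - 1, by omega⟩ = 0 := by
    rw [he_def]
    simp [hz]
  have hde : d • e = z - y := by
    rw [he_def, smul_smul, mul_inv_cancel₀ hd.ne', one_smul]
  have hye : ⟪y, e⟫ = d⁻¹ * (⟪y, z⟫ - ‖y‖ ^ 2) := by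
    rw [he_def, real_inner_smul_right, inner_sub_right, real_inner_self_eq_norm_sq]
  have hd2 : d ^ 2 = ‖z‖ ^ 2 - 2 * ⟪y, z⟫ + ‖y‖ ^ 2 := by
    rw [hd_def, norm_sub_sq_real, real_inner_comm]
  have hkey : 0 ≤ ⟪y, e⟫ + d / 2 := by
    have h1 : d * (⟪y, e⟫ + d / 2) = (‖z‖ ^ 2 - ‖y‖ ^ 2) / 2 := by
      rw [hye]
      have hcan : d * (d⁻¹ * (⟪y, z⟫ - ‖y‖ ^ 2)) = ⟪y, z⟫ - ‖y‖ ^ 2 := by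
        rw [← mul_assoc, mul_inv_cancel₀ hd.ne', one_mul]
      nlinarith [hd2, hcan]
    have hsq : ‖y‖ ^ 2 ≤ ‖z‖ ^ 2 := by nlinarith [norm_nonneg y]
    nlinarith [h1, hsq, hd]
  -- for each ε > 0, reflection inequality
  have hε : ∀ ε : ℝ, 0 < ε → u (z + (2 * ε) • e) ≤ u y := by
    intro ε hε
    set a : ℝ := ⟪y, e⟫ + d / 2 + ε with ha_def
    have ha : 0 < a := by
      have := hkey; simp only [ha_def]; linarith
    have hlt : ⟪y, e⟫ < a := by
      simp only [ha_def]; linarith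
    have h := hrefl a ha e he_norm he_last y hy hlt
    have hpt : y - (2 * (⟪y, e⟫ - a)) • e = z + (2 * ε) • e := by
      have h2 : 2 * (⟪y, e⟫ - a) = -(d + 2 * ε) := by
        simp only [ha_def]; ring
      rw [h2, neg_smul, sub_neg_eq_add, add_smul, hde]
      abel
    rwa [hpt] at h
  -- limit ε → 0⁺
  have hT : Filter.Tendsto (fun ε : ℝ => u (z + (2 * ε) • e)) (nhdsWithin 0 (Set.Ioi 0))
      (nhds (u z)) := by
    have hc : Continuous fun ε : ℝ => z + (2 * ε) • e :=
      continuous_const.add ((continuous_const.mul continuous_id).smul continuous_const)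
    have := (hcont.comp hc).tendsto 0
    simp only [Function.comp] at this
    have h0 : z + (2 * (0:ℝ)) • e = z := by simp
    rw [h0] at this
    exact this.mono_left nhdsWithin_le_nhds
  exact le_of_tendsto hT (by
    filter_upwards [self_mem_nhdsWithin] with ε hε' using hε ε hε')

/-- If a continuous function satisfies the plane-reflection inequalities obtained from the
moving spheres method (for every horizontal unit direction `e` and every level `a > 0`),
then on the upper half-space it is axially symmetric in `y'` and nonincreasing in `|y'|`. -/
theorem stmt13 (n : ℕ) (hn : 3 ≤ n) (u : EuclideanSpace ℝ (Fin n) → ℝ)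
    (hcont : Continuous u)
    (hrefl : ∀ a : ℝ, 0 < a → ∀ e : EuclideanSpace ℝ (Fin n),
      ‖e‖ = 1 → e ⟨n - 1, by omega⟩ = 0 →
      ∀ y : EuclideanSpace ℝ (Fin n), 0 < y ⟨n - 1, by omega⟩ → ⟪y, e⟫ < a →
        u (y - (2 * (⟪y, e⟫ - a)) • e) ≤ u y) :
    (∀ y z : EuclideanSpace ℝ (Fin n), 0 < y ⟨n - 1, by omega⟩ →
      z ⟨n - 1, by omega⟩ = y ⟨n - 1, by omega⟩ →
      ‖z‖ ^ 2 - z ⟨n - 1, by omega⟩ ^ 2 = ‖y‖ ^ 2 - y ⟨n - 1, by omega⟩ ^ 2 →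
      u z = u y) ∧
    (∀ y z : EuclideanSpace ℝ (Fin n), 0 < y ⟨n - 1, by omega⟩ →
      z ⟨n - 1, by omega⟩ = y ⟨n - 1, by omega⟩ →
      ‖y‖ ^ 2 - y ⟨n - 1, by omega⟩ ^ 2 ≤ ‖z‖ ^ 2 - z ⟨n - 1, by omega⟩ ^ 2 →
      u z ≤ u y) := by
  constructor
  · intro y z hy hz heq
    have hnorm : ‖z‖ = ‖y‖ := by
      have h2 : ‖z‖ ^ 2 = ‖y‖ ^ 2 := by rw [hz] at heq; linarith
      nlinarith [norm_nonneg y, norm_nonneg z]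
    refine le_antisymm ?_ ?_
    · exact stmt13_key n (by omega) u hcont hrefl y z hy hz (le_of_eq hnorm.symm)
    · exact stmt13_key n (by omega) u hcont hrefl z y (by rw [hz]; exact hy) hz.symm
        (le_of_eq hnorm)
  · intro y z hy hz hle
    have hnorm : ‖y‖ ≤ ‖z‖ := by
      have h2 : ‖y‖ ^ 2 ≤ ‖z‖ ^ 2 := by rw [hz] at hle; linarith
      nlinarith [norm_nonneg y, norm_nonneg z]
    exact stmt13_key n (by omega) u hcont hrefl y z hy hz hnorm
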